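/- arXiv:1803.09098 — 3 statements merged into one kernel-verified Lean document; each statement's English description precedes it below -/
import Mathlib

section
/- Let G be a finite group acting on a finitely generated free chain complex C_* over a commutative ring R preserving the basis Ω, let M be a G-equivariant acyclic matching on P(C_*, Ω) with all weights w(b ≻ a) invertible for (a,b) ∈ M, and let (a,b) ∈ M with b ∈ Ωₙ. Then for any g ∈ G with g·b ≠ b, the coefficient of a in ∂(g·b) is zero. -/
/-- Equivariant acyclic matching with invertible weights on `P(C,Ω)`:
for a matched pair `(a,b)` with `b ∈ Ωₙ₊₁` and any `g ∈ G` with `g • b ≠ b`,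
the coefficient of `a` in `∂(g • b)` vanishes. -/
theorem stmt6 {R G : Type} [CommRing R] [Group G] [Finite G]
    (ι : ℤ → Type) [∀ n, Fintype (ι n)]
    (C : ℤ → Type) [∀ n, AddCommGroup (C n)] [∀ n, Module R (C n)]
    (Ω : ∀ n, Module.Basis (ι n) R (C n))
    (d : ∀ n : ℤ, C (n + 1) →ₗ[R] C n)
    (hdd : ∀ n, (d n) ∘ₗ (d (n + 1)) = 0)
    (σ : G → ∀ n, ι n → ι n)
    (hσone : ∀ n (i : ι n), σ 1 n i = i)
    (hσmul : ∀ g h n (i : ι n), σ (g * h) n i = σ g n (σ h n i))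
    (A : G → ∀ n, C n →ₗ[R] C n)
    (hA : ∀ g n (i : ι n), A g n (Ω n i) = Ω n (σ g n i))
    (hchain : ∀ g n, (d n) ∘ₗ (A g (n + 1)) = (A g n) ∘ₗ (d n))
    (M : Set ((Σ n, ι n) × (Σ n, ι n)))
    -- matched pairs are covering pairs of the poset P(C,Ω)
    (hstep : ∀ e ∈ M, ∃ h : e.2.1 = e.1.1 + 1,
      (Ω e.1.1).repr (d e.1.1 (h ▸ (Ω e.2.1) e.2.2)) e.1.2 ≠ 0)
    -- each element appears in at most one matched pair
    (hdisj : ∀ e ∈ M, ∀ e' ∈ M, e ≠ e' →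
      e.1 ≠ e'.1 ∧ e.1 ≠ e'.2 ∧ e.2 ≠ e'.1 ∧ e.2 ≠ e'.2)
    -- acyclicity
    (hacyclic : ¬ ∃ (m : ℕ) (_ : 2 ≤ m) (p q : ZMod m → Σ n, ι n),
      (∀ i, (p i, q i) ∈ M) ∧ Function.Injective q ∧
      ∀ i, ∃ h : (q (i + 1)).1 = (p i).1 + 1,
        (Ω (p i).1).repr (d (p i).1 (h ▸ (Ω (q (i + 1)).1) (q (i + 1)).2))
          (p i).2 ≠ 0)
    -- G-equivariance of M
    (hGM : ∀ e ∈ M, ∀ g : G,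
      ((⟨e.1.1, σ g e.1.1 e.1.2⟩ : Σ n, ι n),
       (⟨e.2.1, σ g e.2.1 e.2.2⟩ : Σ n, ι n)) ∈ M)
    -- the weights of matched pairs are invertible
    (hunit : ∀ e ∈ M, ∀ h : e.2.1 = e.1.1 + 1,
      IsUnit ((Ω e.1.1).repr (d e.1.1 (h ▸ (Ω e.2.1) e.2.2)) e.1.2))
    (n : ℤ) (a : ι n) (b : ι (n + 1))
    (hab : ((⟨n, a⟩ : Σ n, ι n), (⟨n + 1, b⟩ : Σ n, ι n)) ∈ M)
    (g : G) (hgb : σ g (n + 1) b ≠ b) :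
    (Ω n).repr (d n (Ω (n + 1) (σ g (n + 1) b))) a = 0 := by
  classical
  -- every σ h n is injective
  have hinj : ∀ (h : G) (k : ℤ), Function.Injective (σ h k) := by
    intro h k x y e
    have hx : σ h⁻¹ k (σ h k x) = x := by rw [← hσmul, inv_mul_cancel, hσone]
    have hy : σ h⁻¹ k (σ h k y) = y := by rw [← hσmul, inv_mul_cancel, hσone]
    rw [← hx, ← hy, e]
  -- transport of coefficients along the action
  have key : ∀ (h : G) (k : ℤ) (j : ι k) (x : C k),
      (Ω k).repr (A h k x) (σ h k j) = (Ω k).repr x j := by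
    intro h k j x
    have hmaps :
        ((Finsupp.lapply (σ h k j) : (ι k →₀ R) →ₗ[R] R).comp
          (((Ω k).repr : C k →ₗ[R] (ι k →₀ R)).comp (A h k)))
        = (Finsupp.lapply j : (ι k →₀ R) →ₗ[R] R).comp
            ((Ω k).repr : C k →ₗ[R] (ι k →₀ R)) := by
      apply Module.Basis.ext (Ω k)
      intro i
      simp [hA, Module.Basis.repr_self, Finsupp.single_apply, (hinj h k).eq_iff]
    exact LinearMap.congr_fun hmaps x
  have dcomm : ∀ (h : G) (x : ι (n+1)),
      d n (Ω (n+1) (σ h (n+1) x)) = A h n (d n (Ω (n+1) x)) := by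
    intro h x
    rw [← hA h (n+1)]
    exact LinearMap.congr_fun (hchain h n) (Ω (n+1) x)
  have coeff : ∀ (h : G),
      (Ω n).repr (d n (Ω (n+1) (σ h (n+1) (σ g (n+1) b)))) (σ h n a)
        = (Ω n).repr (d n (Ω (n+1) (σ g (n+1) b))) a := by
    intro h
    rw [dcomm, key]
  by_contra hne
  -- the orbit of b under g is finite with period m
  have hex : ∃ k : ℕ, 0 < k ∧ σ (g ^ k) (n+1) b = b := by
    refine ⟨orderOf g, (isOfFinOrder_of_finite g).orderOf_pos, ?_⟩
    rw [pow_orderOf_eq_one, hσone]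
  obtain ⟨m, hm0, hmb, hmin⟩ :
      ∃ m, 0 < m ∧ σ (g ^ m) (n+1) b = b ∧
        ∀ k, 0 < k → k < m → σ (g ^ k) (n+1) b ≠ b := by
    refine ⟨Nat.find hex, (Nat.find_spec hex).1, (Nat.find_spec hex).2, ?_⟩
    intro k hk hkm hkb
    exact Nat.find_min hex hkm ⟨hk, hkb⟩
  have hm1 : 1 < m := by
    rcases Nat.lt_or_ge 1 m with h | h
    · exact h
    · exfalso
      have hm1' : m = 1 := le_antisymm h hm0
      rw [hm1', pow_one] at hmb
      exact hgb hmb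
  haveI : NeZero m := ⟨by omega⟩
  haveI : Fact (1 < m) := ⟨hm1⟩
  have hper2 : ∀ s t : ℕ, σ (g ^ (s + t * m)) (n+1) b = σ (g ^ s) (n+1) b := by
    intro s t
    induction t with
    | zero => simp
    | succ t ih =>
        rw [Nat.succ_mul, ← Nat.add_assoc, pow_add, hσmul, hmb]
        exact ih
  have hmod : ∀ s : ℕ, σ (g ^ (s % m)) (n+1) b = σ (g ^ s) (n+1) b := by
    intro s
    conv_rhs => rw [← Nat.mod_add_div s m, Nat.mul_comm]
    exact (hper2 _ _).symm
  have hcancel : ∀ s t : ℕ, s ≤ t → σ (g ^ s) (n+1) b = σ (g ^ t) (n+1) b →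
      σ (g ^ (t - s)) (n+1) b = b := by
    intro s t hle hst
    have h2 : σ (g ^ t) (n+1) b = σ (g ^ s) (n+1) (σ (g ^ (t - s)) (n+1) b) := by
      rw [← hσmul, ← pow_add, Nat.add_sub_cancel' hle]
    rw [h2] at hst
    exact (hinj (g ^ s) (n+1) hst.symm)
  apply hacyclic
  refine ⟨m, hm1, fun i => ⟨n, σ (g ^ i.val) n a⟩,
    fun i => ⟨n + 1, σ (g ^ i.val) (n+1) b⟩, ?_, ?_, ?_⟩
  · intro i
    exact hGM _ hab (g ^ i.val)
  · intro i j hij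
    have hij' : σ (g ^ i.val) (n+1) b = σ (g ^ j.val) (n+1) b := by
      exact sigma_mk_injective hij
    have hvals : i.val = j.val := by
      rcases le_total i.val j.val with hle | hle
      · by_contra hne'
        have hd : 0 < j.val - i.val := by omega
        have hdm : j.val - i.val < m := by have := ZMod.val_lt j; omega
        exact hmin _ hd hdm (hcancel _ _ hle hij')
      · by_contra hne'
        have hd : 0 < i.val - j.val := by omega
        have hdm : i.val - j.val < m := by have := ZMod.val_lt i; omega
        exact hmin _ hd hdm (hcancel _ _ hle hij'.symm)
    exact ZMod.val_injective m hvals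
  · intro i
    refine ⟨rfl, ?_⟩
    show (Ω n).repr (d n (Ω (n+1) (σ (g ^ (i+1).val) (n+1) b))) (σ (g ^ i.val) n a) ≠ 0
    have hv : σ (g ^ (i+1).val) (n+1) b = σ (g ^ (i.val + 1)) (n+1) b := by
      rw [← hmod (i+1).val, ← hmod (i.val + 1)]
      congr 2
      rw [ZMod.val_add, ZMod.val_one, Nat.mod_mod_of_dvd _ dvd_rfl]
    rw [hv, pow_succ, hσmul, coeff (g ^ i.val)]
    exact hne
end

section
/- Let G be a finite group acting on a finitely generated free chain complex C_* over a commutative ring R preserving the basis Ω, and let (a,b) be a pair with b ∈ Ωₙ, a ∈ Ωₙ₋₁, such that w(b ≻ a) = k_a(∂b) is invertible in R and k_a(∂(g·b)) = 0 whenever g·b ≠ b. Then the restriction ∂ₙ^{Gb} : span(G·b) → span(G·∂b) of the differential to the span of the orbit of b is an isomorphism of R-modules. -/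
/-- If `(a,b)` has invertible weight `w(b ≻ a)` and `k_a(∂(g•b)) = 0` whenever
`g•b ≠ b`, then the restriction `∂ₙ^{Gb} : span(G•b) → span(G•∂b)` of the
differential is an isomorphism of `R`-modules. -/
theorem stmt7 {R G : Type} [CommRing R] [Group G] [Finite G]
    (ι : ℤ → Type) [∀ n, Fintype (ι n)]
    (C : ℤ → Type) [∀ n, AddCommGroup (C n)] [∀ n, Module R (C n)]
    (Ω : ∀ n, Module.Basis (ι n) R (C n))
    (d : ∀ n : ℤ, C (n + 1) →ₗ[R] C n)
    (hdd : ∀ n, (d n) ∘ₗ (d (n + 1)) = 0)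
    (σ : G → ∀ n, ι n → ι n)
    (hσone : ∀ n (i : ι n), σ 1 n i = i)
    (hσmul : ∀ g h n (i : ι n), σ (g * h) n i = σ g n (σ h n i))
    (A : G → ∀ n, C n →ₗ[R] C n)
    (hA : ∀ g n (i : ι n), A g n (Ω n i) = Ω n (σ g n i))
    (hchain : ∀ g n, (d n) ∘ₗ (A g (n + 1)) = (A g n) ∘ₗ (d n))
    (n : ℤ) (a : ι n) (b : ι (n + 1))
    (hunit : IsUnit ((Ω n).repr (d n (Ω (n + 1) b)) a))
    (hzero : ∀ g : G, σ g (n + 1) b ≠ b →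
      (Ω n).repr (d n (Ω (n + 1) (σ g (n + 1) b))) a = 0)
    (hmaps : ∀ x ∈ Submodule.span R
        (Set.range fun g : G => A g (n + 1) (Ω (n + 1) b)),
      d n x ∈ Submodule.span R (Set.range fun g : G => A g n (d n (Ω (n + 1) b)))) :
    Function.Bijective ((d n).restrict hmaps) := by
  have : Fintype G := Fintype.ofFinite G
  classical
  set w := (Ω n).repr (d n (Ω (n + 1) b)) a with hw
  constructor
  · rw [injective_iff_map_eq_zero]
    intro x hx0
    have hdx : d n (x : C (n+1)) = 0 := congrArg Subtype.val hx0
    obtain ⟨c, hc⟩ := (Submodule.mem_span_range_iff_exists_fun R).mp x.2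
    have key : ∀ h : G,
        ∑ g ∈ Finset.univ.filter (fun g => σ g (n+1) b = σ h (n+1) b), c g = 0 := by
      intro h
      have h1 : d n (A h⁻¹ (n+1) (x : C (n+1))) = 0 := by
        have e := LinearMap.congr_fun (hchain h⁻¹ n) (x : C (n+1))
        simp only [LinearMap.comp_apply] at e
        rw [e, hdx, map_zero]
      have h2 : A h⁻¹ (n+1) (x : C (n+1))
          = ∑ g : G, c g • Ω (n+1) (σ (h⁻¹ * g) (n+1) b) := by
        rw [← hc, map_sum]
        refine Finset.sum_congr rfl fun g _ => ?_
        rw [map_smul, hA, hA, ← hσmul]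
      have hiff : ∀ g : G, σ (h⁻¹ * g) (n+1) b = b ↔ σ g (n+1) b = σ h (n+1) b := by
        intro g
        constructor
        · intro e
          have := congrArg (σ h (n+1)) e
          rwa [← hσmul, mul_inv_cancel_left] at this
        · intro e
          have := congrArg (σ h⁻¹ (n+1)) e
          rwa [← hσmul, ← hσmul, inv_mul_cancel, hσone] at this
      have h3 : (0 : R) = ∑ g : G, c g * ((Ω n).repr
          (d n (Ω (n+1) (σ (h⁻¹ * g) (n+1) b))) a) := by
        have := congrArg (fun z => (Ω n).repr (d n z) a) h2
        simp only [h1, map_zero, Finsupp.coe_zero, Pi.zero_apply] at this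
        simpa [map_sum, Finsupp.sum_apply] using this
      have h4 : (0 : R) = (∑ g ∈ Finset.univ.filter
          (fun g => σ g (n+1) b = σ h (n+1) b), c g) * w := by
        rw [h3, Finset.sum_mul]
        rw [Finset.sum_filter]
        refine Finset.sum_congr rfl fun g _ => ?_
        by_cases hb : σ (h⁻¹ * g) (n+1) b = b
        · rw [hb, if_pos ((hiff g).mp hb)]
        · rw [hzero _ hb, mul_zero, if_neg (fun e => hb ((hiff g).mpr e))]
      refine hunit.mul_left_cancel ?_
      rw [mul_zero, mul_comm, ← h4]
    -- now show x = 0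
    have hrepr : ∀ i : ι (n+1), (Ω (n+1)).repr (x : C (n+1)) i = 0 := by
      intro i
      have : (Ω (n+1)).repr (x : C (n+1)) i
          = ∑ g ∈ Finset.univ.filter (fun g => σ g (n+1) b = i), c g := by
        rw [← hc]
        simp only [map_sum, map_smul, hA, Module.Basis.repr_self]
        rw [Finset.sum_apply', Finset.sum_filter]
        refine Finset.sum_congr rfl fun g _ => ?_
        rw [Finsupp.smul_apply, Finsupp.single_apply]
        split <;> simp
      rw [this]
      by_cases hex : ∃ h : G, σ h (n+1) b = i
      · obtain ⟨h, rfl⟩ := hex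
        exact key h
      · rw [Finset.filter_eq_empty_iff.mpr (fun g _ e => hex ⟨g, e⟩)]
        exact Finset.sum_empty
    have : (x : C (n+1)) = 0 := by
      apply (Ω (n+1)).repr.injective
      ext i
      simp [hrepr i]
    exact Subtype.ext this
  · rintro ⟨y, hy⟩
    have : ∃ x ∈ Submodule.span R
        (Set.range fun g : G => A g (n + 1) (Ω (n + 1) b)), d n x = y := by
      refine Submodule.span_induction ?_ ?_ ?_ ?_ hy
      · rintro _ ⟨g, rfl⟩
        exact ⟨A g (n+1) (Ω (n+1) b),
          Submodule.subset_span ⟨g, rfl⟩,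
          (LinearMap.congr_fun (hchain g n) (Ω (n+1) b))⟩
      · exact ⟨0, Submodule.zero_mem _, map_zero _⟩
      · rintro u v _ _ ⟨x1, hx1, rfl⟩ ⟨x2, hx2, rfl⟩
        exact ⟨x1 + x2, Submodule.add_mem _ hx1 hx2, map_add _ _ _⟩
      · rintro r u _ ⟨x1, hx1, rfl⟩
        exact ⟨r • x1, Submodule.smul_mem _ r hx1, map_smul _ _ _⟩
    obtain ⟨x, hxM, hdx⟩ := this
    exact ⟨⟨x, hxM⟩, Subtype.ext hdx⟩
end

section
/- Let G be a finite group acting on a finitely generated free chain complex C_* over a commutative ring R with G-invariant basis Ω, and let M be a G-equivariant acyclic matching on P(C_*, Ω) such that every weight w(b ≻ a) with (a,b) ∈ M is invertible in R. Then there exists a G-chain complex C_*^M and a G-equivariant chain isomorphism C_* ≅ C_*^M ⊕ T_*, where T_* = ⊕_{G(a,b) ∈ M/G} 𝒜(Gb) is the direct sum over orbits of matched pairs of the two-term complexes 𝒜(Gb) = (span(G·b) → span(G·∂b)). -/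
/-- A `G`-chain complex: a chain complex of `R`-modules with a `G`-action by
chain maps. -/
structure GChain (R G : Type) [CommRing R] [Group G] where
  X : ℤ → Type
  [addcommgroup : ∀ n, AddCommGroup (X n)]
  [module : ∀ n, Module R (X n)]
  d : ∀ n : ℤ, X (n + 1) →ₗ[R] X n
  dd : ∀ n, (d n) ∘ₗ (d (n + 1)) = 0
  ρ : G → ∀ n, X n →ₗ[R] X n
  ρ_one : ∀ n (x : X n), ρ 1 n x = x
  ρ_mul : ∀ g h n (x : X n), ρ (g * h) n x = ρ g n (ρ h n x)
  ρ_d : ∀ g n, (d n) ∘ₗ (ρ g (n + 1)) = (ρ g n) ∘ₗ (d n)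

attribute [instance] GChain.addcommgroup GChain.module

/-- The degree-`n` part of `T_* = ⊕_{G(a,b) ∈ M/G} 𝒜(Gb)`, realized as the
subcomplex of `C_*` spanned in degree `n` by the `G`-orbits of the upper
elements `b` of matched pairs of degree `n` together with the `G`-orbits of
`∂b` for upper elements `b` of degree `n+1`.  (Since `M` is `G`-equivariant,
this span is exactly `⊕ span(G•b) ⊕ ⊕ span(G•∂b)`.) -/
def TT {R : Type} [CommRing R] {ι : ℤ → Type}
    {C : ℤ → Type} [∀ n, AddCommGroup (C n)] [∀ n, Module R (C n)]
    (Ω : ∀ n, Module.Basis (ι n) R (C n)) (d : ∀ n : ℤ, C (n + 1) →ₗ[R] C n)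
    (M : Set ((Σ n, ι n) × (Σ n, ι n))) (n : ℤ) : Submodule R (C n) :=
  Submodule.span R
    ({x | ∃ i : ι n, (∃ a, (a, (⟨n, i⟩ : Σ n, ι n)) ∈ M) ∧ x = Ω n i} ∪
     {x | ∃ j : ι (n + 1), (∃ a, (a, (⟨n + 1, j⟩ : Σ n, ι n)) ∈ M) ∧
       x = d n (Ω (n + 1) j)})



section Cycle

variable {α : Type} {r : α → α → Prop}

private lemma path_of_transGen {a b : α} (h : Relation.TransGen r a b) :
    ∃ (k : ℕ) (f : ℕ → α), 1 ≤ k ∧ f 0 = a ∧ f k = b ∧ ∀ i < k, r (f i) (f (i+1)) := by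
  induction h with
  | @single c hab =>
      exact ⟨1, fun i => if i = 0 then a else c, le_refl _, by simp, by simp, fun i hi => by
        interval_cases i; simpa using hab⟩
  | @tail b c hab hbc ih =>
      obtain ⟨k, f, hk, hf0, hfl, hchain⟩ := ih
      refine ⟨k + 1, Function.update f (k+1) c, by omega, ?_, by simp, ?_⟩
      · rw [Function.update_of_ne (by omega)]; exact hf0
      · intro i hi
        rcases Nat.lt_or_ge i k with hik | hik
        · rw [Function.update_of_ne (by omega), Function.update_of_ne (by omega)]
          exact hchain i hik
        · have hik' : i = k := by omega
          subst hik'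
          rw [Function.update_of_ne (by omega), Function.update_self, hfl]
          exact hbc

/-- extract an injective cycle from a transitive-closure loop -/
lemma exists_injective_cycle (hirr : ∀ a, ¬ r a a) {x : α}
    (hx : Relation.TransGen r x x) :
    ∃ (m : ℕ) (_ : 2 ≤ m) (f : ZMod m → α), Function.Injective f ∧
      ∀ i, r (f i) (f (i + 1)) := by
  have hex : ∃ k : ℕ, 1 ≤ k ∧ ∃ f : ℕ → α, f 0 = f k ∧ ∀ i < k, r (f i) (f (i+1)) := by
    obtain ⟨k, f, hk, hf0, hfl, hch⟩ := path_of_transGen hx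
    exact ⟨k, hk, f, by rw [hf0, hfl], hch⟩
  classical
  let m := Nat.find hex
  obtain ⟨hm1, f, hf0, hch⟩ : 1 ≤ m ∧ ∃ f : ℕ → α, f 0 = f m ∧ ∀ i < m, r (f i) (f (i+1)) :=
    Nat.find_spec hex
  -- no shorter cycle
  have hmin : ∀ k, 1 ≤ k → k < m → ∀ g : ℕ → α, g 0 = g k → ¬ ∀ i < k, r (g i) (g (i+1)) :=
    fun k h1 hkm g hg hc => Nat.find_min hex hkm ⟨h1, g, hg, hc⟩
  have hm2 : 2 ≤ m := by
    rcases Nat.lt_or_ge m 2 with h | h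
    · exfalso
      have hm1' : m = 1 := by omega
      have := hch 0 (by omega)
      rw [hm1'] at hf0
      rw [← hf0] at this
      exact hirr _ this
    · exact h
  -- injectivity of f on [0, m)
  have hinj : ∀ i < m, ∀ j < m, f i = f j → i = j := by
    intro i hi j hj hij
    by_contra hne
    -- wlog i < j
    rcases Nat.lt_or_ge i j with hlt | hge
    · -- cycle f i, ..., f j of length j - i < m
      refine hmin (j - i) (by omega) (by omega) (fun t => f (i + t)) ?_ ?_
      · simp only [Nat.add_zero]
        rw [Nat.add_sub_cancel' (le_of_lt hlt)]
        exact hij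
      · intro t ht
        have h2 := hch (i + t) (by omega)
        show r (f (i + t)) (f (i + (t+1)))
        rwa [← Nat.add_assoc]
    · have hlt : j < i := by omega
      refine hmin (i - j) (by omega) (by omega) (fun t => f (j + t)) ?_ ?_
      · simp only [Nat.add_zero]
        rw [Nat.add_sub_cancel' (le_of_lt hlt)]
        exact hij.symm
      · intro t ht
        have h2 := hch (j + t) (by omega)
        show r (f (j + t)) (f (j + (t+1)))
        rwa [← Nat.add_assoc]
  haveI : NeZero m := ⟨by omega⟩
  refine ⟨m, hm2, fun z => f z.val, ?_, ?_⟩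
  · intro z w hzw
    have := hinj z.val (ZMod.val_lt z) w.val (ZMod.val_lt w) hzw
    exact ZMod.val_injective m this
  · intro i
    have hval : (i + 1).val = (i.val + 1) % m := by
      rw [ZMod.val_add, ZMod.val_one_eq_one_mod]
      simp [Nat.add_mod]
    show r (f i.val) (f (i+1).val)
    rcases Nat.lt_or_ge (i.val + 1) m with h | h
    · rw [hval, Nat.mod_eq_of_lt h]
      exact hch i.val (by omega)
    · have hieq : i.val = m - 1 := by have := ZMod.val_lt i; omega
      have : (i.val + 1) % m = 0 := by rw [hieq]; simp [Nat.sub_add_cancel (by omega : 1 ≤ m)]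
      rw [hval, this, hf0]
      have h3 := hch i.val (by omega)
      rwa [hieq, Nat.sub_add_cancel (by omega : 1 ≤ m), ← hieq] at h3

end Cycle

section OrderEmb

/-- An acyclic relation on a fintype embeds into `Fin (card α)` monotonely. -/
lemma exists_acyclic_embedding {α : Type} [Fintype α] {r : α → α → Prop}
    (h : ∀ x, ¬ Relation.TransGen r x x) :
    ∃ φ : α → Fin (Fintype.card α), Function.Injective φ ∧
      ∀ a b, r a b → φ a < φ b := by
  classical
  set t := Relation.TransGen r with ht
  let r' : α → α → Prop := fun a b => a = b ∨ t a b
  haveI : IsPartialOrder α r' := {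
    refl := fun a => Or.inl rfl
    trans := by
      rintro a b c (rfl | hab) (rfl | hbc)
      · exact Or.inl rfl
      · exact Or.inr hbc
      · exact Or.inr hab
      · exact Or.inr (hab.trans hbc)
    antisymm := by
      rintro a b (rfl | hab) h2
      · rfl
      · rcases h2 with rfl | hba
        · rfl
        · exact absurd (hab.trans hba) (h a) }
  obtain ⟨s, hs, hrs⟩ := extend_partialOrder r'
  haveI := hs
  have stot : ∀ a b, s a b ∨ s b a := fun a b => hs.total a b
  have strans : ∀ {a b c}, s a b → s b c → s a c := fun hab hbc => hs.trans _ _ _ hab hbc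
  have santi : ∀ {a b}, s a b → s b a → a = b := fun hab hba => hs.antisymm _ _ hab hba
  let below : α → Finset α := fun a => Finset.univ.filter (fun k => s k a ∧ k ≠ a)
  have hmono : ∀ a b, s a b → a ≠ b → (below a).card < (below b).card := by
    intro a b hab hne
    apply Finset.card_lt_card
    constructor
    · intro k hk
      simp only [below, Finset.mem_filter, Finset.mem_univ, true_and] at hk ⊢
      refine ⟨strans hk.1 hab, ?_⟩
      rintro rfl
      exact hne (santi hab hk.1)
    · intro hsub
      have : a ∈ below b := by
        simp only [below, Finset.mem_filter, Finset.mem_univ, true_and]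
        exact ⟨hab, hne⟩
      have : a ∈ below a := hsub this
      simp only [below, Finset.mem_filter] at this
      exact this.2.2 rfl
  have hcard : ∀ a, (below a).card < Fintype.card α := by
    intro a
    apply Finset.card_lt_card
    constructor
    · exact Finset.subset_univ _
    · intro hsub
      have : a ∈ below a := hsub (Finset.mem_univ a)
      simp only [below, Finset.mem_filter] at this
      exact this.2.2 rfl
  refine ⟨fun a => ⟨(below a).card, hcard a⟩, ?_, ?_⟩
  · intro a b hab
    by_contra hne
    rcases stot a b with hs1 | hs1
    · have := hmono a b hs1 hne
      simp only [Fin.mk.injEq] at hab; omega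
    · have := hmono b a hs1 (Ne.symm hne)
      simp only [Fin.mk.injEq] at hab; omega
  · intro a b hab
    have hne : a ≠ b := by
      rintro rfl
      exact h a (Relation.TransGen.single hab)
    have hsab : s a b := hrs _ _ (Or.inr (Relation.TransGen.single hab))
    exact hmono a b hsab hne

end OrderEmb


section Main

open Classical

variable {R G : Type} [CommRing R] [Group G]
variable {ι : ℤ → Type} [∀ n, Fintype (ι n)]
variable {C : ℤ → Type} [∀ n, AddCommGroup (C n)] [∀ n, Module R (C n)]

/-- cast equivalence between degreewise components -/
noncomputable def ceq {m n : ℤ} (h : m = n) : C m ≃ₗ[R] C n :=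
  h ▸ LinearEquiv.refl R (C m)

@[simp] lemma ceq_rfl {n : ℤ} (x : C n) : ceq (R := R) (rfl : n = n) x = x := rfl

variable (Ω : ∀ n, Module.Basis (ι n) R (C n))
variable (d : ∀ n : ℤ, C (n + 1) →ₗ[R] C n)
variable (M : Set ((Σ n, ι n) × (Σ n, ι n)))

def lowP (n : ℤ) (i : ι n) : Prop := ∃ b, ((⟨n, i⟩ : Σ n, ι n), b) ∈ M

def upP (n : ℤ) (i : ι n) : Prop := ∃ a, (a, (⟨n, i⟩ : Σ n, ι n)) ∈ M

variable (hstep : ∀ e ∈ M, ∃ h : e.2.1 = e.1.1 + 1,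
      (Ω e.1.1).repr (d e.1.1 (h ▸ (Ω e.2.1) e.2.2)) e.1.2 ≠ 0)
variable (hdisj : ∀ e ∈ M, ∀ e' ∈ M, e ≠ e' →
      e.1 ≠ e'.1 ∧ e.1 ≠ e'.2 ∧ e.2 ≠ e'.1 ∧ e.2 ≠ e'.2)
variable (hacyclic : ¬ ∃ (m : ℕ) (_ : 2 ≤ m) (p q : ZMod m → Σ n, ι n),
      (∀ i, (p i, q i) ∈ M) ∧ Function.Injective q ∧
      ∀ i, ∃ h : (q (i + 1)).1 = (p i).1 + 1,
        (Ω (p i).1).repr (d (p i).1 (h ▸ (Ω (q (i + 1)).1) (q (i + 1)).2))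
          (p i).2 ≠ 0)
variable (hunit : ∀ e ∈ M, ∀ h : e.2.1 = e.1.1 + 1,
      IsUnit ((Ω e.1.1).repr (d e.1.1 (h ▸ (Ω e.2.1) e.2.2)) e.1.2))

include Ω d M hstep hdisj hacyclic hunit

lemma M_unique_right {a b b' : Σ n, ι n} (hb : (a, b) ∈ M) (hb' : (a, b') ∈ M) :
    b = b' := by
  by_contra hne
  have hne2 : (a, b) ≠ (a, b') := fun h => hne (congrArg Prod.snd h)
  exact (hdisj _ hb _ hb' hne2).1 rfl

lemma M_unique_left {a a' b : Σ n, ι n} (ha : (a, b) ∈ M) (ha' : (a', b) ∈ M) :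
    a = a' := by
  by_contra hne
  have hne2 : (a, b) ≠ (a', b) := fun h => hne (congrArg Prod.fst h)
  exact (hdisj _ ha _ ha' hne2).2.2.2 rfl

lemma low_up_not {n : ℤ} {i : ι n} (hl : lowP M n i) (hu : upP M n i) : False := by
  obtain ⟨b, hb⟩ := hl
  obtain ⟨a, ha⟩ := hu
  rcases eq_or_ne ((⟨n, i⟩ : Σ n, ι n), b) (a, (⟨n, i⟩ : Σ n, ι n)) with he | hne
  · obtain ⟨hh, -⟩ := hstep _ hb
    have hb1 : b = (⟨n, i⟩ : Σ n, ι n) := (congrArg Prod.snd he)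
    rw [hb1] at hh
    simp only at hh
    omega
  · exact (hdisj _ hb _ ha hne).2.1 rfl

lemma partner_exists {n : ℤ} {i : ι n} (h : lowP M n i) :
    ∃ j : ι (n + 1), ((⟨n, i⟩ : Σ n, ι n), (⟨n + 1, j⟩ : Σ n, ι n)) ∈ M := by
  obtain ⟨b, hb⟩ := h
  obtain ⟨hh, -⟩ := hstep _ hb
  obtain ⟨bf, bs⟩ := b
  simp only at hh
  subst hh
  exact ⟨bs, hb⟩

noncomputable def pt {n : ℤ} (i : ι n) (h : lowP M n i) : ι (n + 1) :=
  (partner_exists Ω d M hstep hdisj hacyclic hunit h).choose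

local notation "PT" => pt Ω d M hstep hdisj hacyclic hunit

lemma pt_mem {n : ℤ} {i : ι n} (h : lowP M n i) :
    ((⟨n, i⟩ : Σ n, ι n), (⟨n + 1, PT i h⟩ : Σ n, ι n)) ∈ M :=
  (partner_exists Ω d M hstep hdisj hacyclic hunit h).choose_spec

lemma pt_unique {n : ℤ} {i : ι n} (h : lowP M n i) {j : ι (n + 1)}
    (hj : ((⟨n, i⟩ : Σ n, ι n), (⟨n + 1, j⟩ : Σ n, ι n)) ∈ M) :
    PT i h = j := by
  have := M_unique_right Ω d M hstep hdisj hacyclic hunit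
    (pt_mem Ω d M hstep hdisj hacyclic hunit h) hj
  simpa [Sigma.mk.inj_iff] using this

lemma pt_inj {n : ℤ} {i i' : ι n} {h : lowP M n i} {h' : lowP M n i'}
    (he : PT i h = PT i' h') : i = i' := by
  have h1 := pt_mem Ω d M hstep hdisj hacyclic hunit h
  have h2 := pt_mem Ω d M hstep hdisj hacyclic hunit h'
  rw [he] at h1
  have := M_unique_left Ω d M hstep hdisj hacyclic hunit h1 h2
  simpa [Sigma.mk.inj_iff] using this

lemma up_succ {n : ℤ} {j : ι (n + 1)} (hu : upP M (n + 1) j) :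
    ∃ (i : ι n) (h : lowP M n i), PT i h = j := by
  obtain ⟨a, ha⟩ := hu
  obtain ⟨hh, -⟩ := hstep _ ha
  obtain ⟨af, as⟩ := a
  simp only at hh
  have haf : af = n := by omega
  subst haf
  exact ⟨as, ⟨_, ha⟩, pt_unique Ω d M hstep hdisj hacyclic hunit _ ha⟩

noncomputable def vv (n : ℤ) (i : ι n) : C n :=
  if h : lowP M n i then d n (Ω (n + 1) (pt Ω d M hstep hdisj hacyclic hunit i h))
  else Ω n i

local notation "VV" => vv Ω d M hstep hdisj hacyclic hunit

lemma vv_low {n : ℤ} {i : ι n} (h : lowP M n i) :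
    VV n i = d n (Ω (n + 1) (PT i h)) := dif_pos h

lemma vv_nonlow {n : ℤ} {i : ι n} (h : ¬ lowP M n i) :
    VV n i = Ω n i := dif_neg h

def edg (n : ℤ) (i j : ι n) : Prop :=
  i ≠ j ∧ lowP M n j ∧
    (Ω n).repr (vv Ω d M hstep hdisj hacyclic hunit n j) i ≠ 0

local notation "EDG" => edg Ω d M hstep hdisj hacyclic hunit

lemma edg_acyclic (n : ℤ) : ∀ x, ¬ Relation.TransGen (EDG n) x x := by
  intro x hx
  have hirr : ∀ a, ¬ EDG n a a := fun a h => h.1 rfl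
  obtain ⟨m, hm, f, hfinj, hcyc⟩ := exists_injective_cycle hirr hx
  apply hacyclic
  have hlow : ∀ i, lowP M n (f i) := by
    intro i
    have h2 := hcyc (i - 1)
    rw [sub_add_cancel] at h2
    exact h2.2.1
  refine ⟨m, hm, fun i => ⟨n, f i⟩, fun i => ⟨n + 1, PT (f i) (hlow i)⟩,
    fun i => pt_mem Ω d M hstep hdisj hacyclic hunit (hlow i), ?_, ?_⟩
  · intro i j hij
    simp only [Sigma.mk.inj_iff, heq_eq_eq, true_and] at hij
    exact hfinj (pt_inj Ω d M hstep hdisj hacyclic hunit hij)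
  · intro i
    refine ⟨rfl, ?_⟩
    have h2 := (hcyc i).2.2
    rw [vv_low Ω d M hstep hdisj hacyclic hunit (hlow (i + 1))] at h2
    exact h2

lemma newB_det (n : ℤ) :
    IsUnit (LinearMap.toMatrix (Ω n) (Ω n)
      ((Ω n).constr ℕ (vv Ω d M hstep hdisj hacyclic hunit n))).det := by
  classical
  set P := LinearMap.toMatrix (Ω n) (Ω n) ((Ω n).constr ℕ (VV n)) with hPdef
  have hP : ∀ i j, P i j = (Ω n).repr (VV n j) i := by
    intro i j
    rw [hPdef, LinearMap.toMatrix_apply, Module.Basis.constr_basis]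
  obtain ⟨φ, φinj, φmono⟩ :=
    exists_acyclic_embedding (edg_acyclic Ω d M hstep hdisj hacyclic hunit n)
  have φbij : Function.Bijective φ :=
    (Fintype.bijective_iff_injective_and_card φ).mpr ⟨φinj, by simp⟩
  let e := Equiv.ofBijective φ φbij
  have htri : (P.submatrix e.symm e.symm).BlockTriangular id := by
    intro x y hxy
    by_contra h0
    set i := e.symm x with hi
    set j := e.symm y with hj
    have hij : i ≠ j := by
      intro h
      rw [hi, hj] at h
      exact absurd (e.symm.injective.eq_iff.mp h ▸ rfl : x = y) (ne_of_gt hxy)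
    have hlowj : lowP M n j := by
      by_contra hl
      rw [Matrix.submatrix_apply, hP, vv_nonlow Ω d M hstep hdisj hacyclic hunit hl,
        Module.Basis.repr_self, Finsupp.single_apply, if_neg (fun h => hij h.symm)] at h0
      exact h0 rfl
    have hedge : EDG n i j := by
      refine ⟨hij, hlowj, ?_⟩
      rw [Matrix.submatrix_apply, hP] at h0
      exact h0
    have hlt := φmono _ _ hedge
    have hx : φ i = x := e.apply_symm_apply x
    have hy : φ j = y := e.apply_symm_apply y
    rw [hx, hy] at hlt
    exact absurd hlt (not_lt.mpr (le_of_lt hxy))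
  have hdet : P.det = ∏ x, P.submatrix e.symm e.symm x x := by
    rw [← Matrix.det_submatrix_equiv_self e.symm P,
      Matrix.det_of_upperTriangular htri]
  have hdiag : ∀ i : ι n, IsUnit (P i i) := by
    intro i
    rw [hP]
    by_cases h : lowP M n i
    · rw [vv_low Ω d M hstep hdisj hacyclic hunit h]
      exact hunit _ (pt_mem Ω d M hstep hdisj hacyclic hunit h) rfl
    · rw [vv_nonlow Ω d M hstep hdisj hacyclic hunit h, Module.Basis.repr_self,
        Finsupp.single_eq_same]
      exact isUnit_one
  rw [hdet]
  exact Finset.prod_induction _ IsUnit (fun a b => IsUnit.mul) isUnit_one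
    (fun x _ => hdiag (e.symm x))

noncomputable def newB (n : ℤ) : Module.Basis (ι n) R (C n) :=
  (Ω n).map (LinearEquiv.ofIsUnitDet (newB_det Ω d M hstep hdisj hacyclic hunit n))

local notation "NB" => newB Ω d M hstep hdisj hacyclic hunit

lemma newB_apply (n : ℤ) (i : ι n) : NB n i = VV n i := by
  rw [newB, Module.Basis.map_apply]
  have hco := LinearEquiv.coe_ofIsUnitDet (newB_det Ω d M hstep hdisj hacyclic hunit n)
  have := DFunLike.congr_fun hco (Ω n i)
  simp only [LinearEquiv.coe_coe] at this
  rw [this, Module.Basis.constr_basis]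

end Main

section Main2

open Classical

set_option linter.unusedSectionVars false

variable {R G : Type} [CommRing R] [Group G]
variable {ι : ℤ → Type} [∀ n, Fintype (ι n)]
variable {C : ℤ → Type} [∀ n, AddCommGroup (C n)] [∀ n, Module R (C n)]
variable (Ω : ∀ n, Module.Basis (ι n) R (C n))
variable (d : ∀ n : ℤ, C (n + 1) →ₗ[R] C n)
variable (M : Set ((Σ n, ι n) × (Σ n, ι n)))
variable (hstep : ∀ e ∈ M, ∃ h : e.2.1 = e.1.1 + 1,
      (Ω e.1.1).repr (d e.1.1 (h ▸ (Ω e.2.1) e.2.2)) e.1.2 ≠ 0)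
variable (hdisj : ∀ e ∈ M, ∀ e' ∈ M, e ≠ e' →
      e.1 ≠ e'.1 ∧ e.1 ≠ e'.2 ∧ e.2 ≠ e'.1 ∧ e.2 ≠ e'.2)
variable (hacyclic : ¬ ∃ (m : ℕ) (_ : 2 ≤ m) (p q : ZMod m → Σ n, ι n),
      (∀ i, (p i, q i) ∈ M) ∧ Function.Injective q ∧
      ∀ i, ∃ h : (q (i + 1)).1 = (p i).1 + 1,
        (Ω (p i).1).repr (d (p i).1 (h ▸ (Ω (q (i + 1)).1) (q (i + 1)).2))
          (p i).2 ≠ 0)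
variable (hunit : ∀ e ∈ M, ∀ h : e.2.1 = e.1.1 + 1,
      IsUnit ((Ω e.1.1).repr (d e.1.1 (h ▸ (Ω e.2.1) e.2.2)) e.1.2))
variable (hdd : ∀ n, (d n) ∘ₗ (d (n + 1)) = 0)
variable (σ : G → ∀ n, ι n → ι n)
variable (hσone : ∀ n (i : ι n), σ 1 n i = i)
variable (hσmul : ∀ g h n (i : ι n), σ (g * h) n i = σ g n (σ h n i))
variable (A : G → ∀ n, C n →ₗ[R] C n)
variable (hA : ∀ g n (i : ι n), A g n (Ω n i) = Ω n (σ g n i))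
variable (hchain : ∀ g n, (d n) ∘ₗ (A g (n + 1)) = (A g n) ∘ₗ (d n))
variable (hGM : ∀ e ∈ M, ∀ g : G,
      ((⟨e.1.1, σ g e.1.1 e.1.2⟩ : Σ n, ι n),
       (⟨e.2.1, σ g e.2.1 e.2.2⟩ : Σ n, ι n)) ∈ M)

local notation "PT" => pt Ω d M hstep hdisj hacyclic hunit
local notation "VV" => vv Ω d M hstep hdisj hacyclic hunit
local notation "NB" => newB Ω d M hstep hdisj hacyclic hunit

include Ω d M hstep hdisj hacyclic hunit hdd σ hσone hσmul A hA hchain hGM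

-- ######## cast lemmas ########

lemma ceq_d {m n : ℤ} (h : m = n) (h1 : m + 1 = n + 1) (x : C (m + 1)) :
    d n (ceq (R := R) h1 x) = ceq (R := R) h (d m x) := by subst h; rfl

lemma ceq_dd {m n : ℤ} (h : m + 1 = n) (x : C (n + 1)) :
    d m ((ceq (R := R) h).symm (d n x)) = 0 := by
  subst h
  show d m (d (m + 1) x) = 0
  simpa using LinearMap.congr_fun (hdd m) x

lemma ceq_Ω {m n : ℤ} (h : m = n) (i : ι m) :
    ceq (R := R) h (Ω m i) = Ω n (h ▸ i) := by subst h; rfl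

lemma ceq_A {m n : ℤ} (h : m = n) (g : G) (x : C m) :
    A g n (ceq (R := R) h x) = ceq (R := R) h (A g m x) := by subst h; rfl

lemma ceq_A_symm {m n : ℤ} (h : m = n) (g : G) (x : C n) :
    A g m ((ceq (R := R) h).symm x) = (ceq (R := R) h).symm (A g n x) := by subst h; rfl

lemma idx_cast_cast {β : ℤ → Type} {m n : ℤ} (h : m = n) (b : β n) :
    h ▸ (h.symm ▸ b : β m) = b := by subst h; rfl

lemma low_cast {m n : ℤ} (h : m = n) {i : ι m} (hl : lowP M m i) :
    lowP M n (h ▸ i) := by subst h; exact hl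

lemma up_cast {m n : ℤ} (h : m = n) {i : ι m} (hu : upP M m i) :
    upP M n (h ▸ i) := by subst h; exact hu

-- ######## equivariance of the matching ########

lemma low_sigma {n : ℤ} {i : ι n} (g : G) (h : lowP M n i) : lowP M n (σ g n i) := by
  obtain ⟨b, hb⟩ := h
  exact ⟨_, hGM _ hb g⟩

lemma up_sigma {n : ℤ} {i : ι n} (g : G) (h : upP M n i) : upP M n (σ g n i) := by
  obtain ⟨a, ha⟩ := h
  exact ⟨_, hGM _ ha g⟩

lemma nonlow_sigma {n : ℤ} {i : ι n} (g : G) (h : ¬ lowP M n i) :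
    ¬ lowP M n (σ g n i) := by
  intro hl
  apply h
  have := low_sigma Ω d M hstep hdisj hacyclic hunit hdd σ hσone hσmul A hA hchain hGM g⁻¹ hl
  rwa [← hσmul, inv_mul_cancel, hσone] at this

lemma pt_sigma {n : ℤ} {i : ι n} (g : G) (h : lowP M n i) :
    PT (σ g n i) (low_sigma Ω d M hstep hdisj hacyclic hunit hdd σ hσone hσmul A hA hchain hGM g h) =
      σ g (n + 1) (PT i h) := by
  apply pt_unique Ω d M hstep hdisj hacyclic hunit
  exact hGM _ (pt_mem Ω d M hstep hdisj hacyclic hunit h) g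

@[simp] lemma ceq_rfl_symm {n : ℤ} (x : C n) :
    (ceq (R := R) (rfl : n = n)).symm x = x := rfl

-- ######## the homotopy-like map η and the splitting map s ########

noncomputable def eta (n : ℤ) : C n →ₗ[R] C (n + 1) :=
  (newB Ω d M hstep hdisj hacyclic hunit n).constr ℕ
    (fun i => if h : lowP M n i then
      Ω (n + 1) (pt Ω d M hstep hdisj hacyclic hunit i h) else 0)

local notation "ETA" => eta Ω d M hstep hdisj hacyclic hunit

def upSpan (n : ℤ) : Submodule R (C n) :=
  Submodule.span R {x | ∃ j, upP M n j ∧ x = Ω n j}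

lemma eta_vv_low {n : ℤ} {i : ι n} (h : lowP M n i) :
    ETA n (VV n i) = Ω (n + 1) (PT i h) := by
  rw [← newB_apply Ω d M hstep hdisj hacyclic hunit n i]
  rw [eta, Module.Basis.constr_basis, dif_pos h]

lemma eta_nonlow {n : ℤ} {i : ι n} (h : ¬ lowP M n i) :
    ETA n (Ω n i) = 0 := by
  have h1 : Ω n i = NB n i := by
    rw [newB_apply Ω d M hstep hdisj hacyclic hunit,
      vv_nonlow Ω d M hstep hdisj hacyclic hunit h]
  rw [h1, eta, Module.Basis.constr_basis, dif_neg h]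

lemma eta_mem (n : ℤ) (x : C n) : ETA n x ∈ upSpan Ω M (n + 1) := by
  have h1 : ETA n x ∈ LinearMap.range (ETA n) := LinearMap.mem_range_self _ x
  rw [eta, Module.Basis.constr_range] at h1
  refine Submodule.span_le.mpr ?_ h1
  rintro y ⟨i, rfl⟩
  by_cases h : lowP M n i
  · simp only [dif_pos h]
    exact Submodule.subset_span
      ⟨_, ⟨_, pt_mem Ω d M hstep hdisj hacyclic hunit h⟩, rfl⟩
  · simp only [dif_neg h]
    exact Submodule.zero_mem _

lemma upSpan_le_TT (n : ℤ) : upSpan Ω M n ≤ TT Ω d M n := by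
  refine Submodule.span_le.mpr ?_
  rintro x ⟨j, hj, rfl⟩
  exact Submodule.subset_span (Or.inl ⟨j, hj, rfl⟩)

lemma d_upSpan (n : ℤ) {x : C (n + 1)} (hx : x ∈ upSpan Ω M (n + 1)) :
    d n x ∈ TT Ω d M n := by
  induction hx using Submodule.span_induction with
  | mem y hy =>
      obtain ⟨j, hj, rfl⟩ := hy
      exact Submodule.subset_span (Or.inr ⟨j, hj, rfl⟩)
  | zero => simpa using Submodule.zero_mem (TT Ω d M n)
  | add y z _ _ hy hz => rw [map_add]; exact Submodule.add_mem _ hy hz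
  | smul c y _ hy => rw [map_smul]; exact Submodule.smul_mem _ c hy

lemma TT_cast {m n : ℤ} (h : m = n) {x : C m} (hx : x ∈ TT Ω d M m) :
    ceq (R := R) h x ∈ TT Ω d M n := by subst h; simpa using hx

noncomputable def smAux (m : ℤ) : C (m + 1) →ₗ[R] C (m + 1) :=
  d (m + 1) ∘ₗ eta Ω d M hstep hdisj hacyclic hunit (m + 1) +
    eta Ω d M hstep hdisj hacyclic hunit m ∘ₗ d m

local notation "SA" => smAux Ω d M hstep hdisj hacyclic hunit

noncomputable def sm (n : ℤ) : C n →ₗ[R] C n :=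
  (ceq (R := R) (show n - 1 + 1 = n by omega)).toLinearMap ∘ₗ
    smAux Ω d M hstep hdisj hacyclic hunit (n - 1) ∘ₗ
      ((ceq (R := R) (show n - 1 + 1 = n by omega)).symm).toLinearMap

local notation "SM" => sm Ω d M hstep hdisj hacyclic hunit

lemma smAux_mem (m : ℤ) (x : C (m + 1)) : SA m x ∈ TT Ω d M (m + 1) := by
  simp only [smAux, LinearMap.add_apply, LinearMap.comp_apply]
  refine Submodule.add_mem _ ?_ ?_
  · exact d_upSpan Ω d M hstep hdisj hacyclic hunit hdd σ hσone hσmul A hA hchain hGM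
      (m + 1) (eta_mem Ω d M hstep hdisj hacyclic hunit hdd σ hσone hσmul A hA hchain hGM
        (m + 1) x)
  · exact upSpan_le_TT Ω d M hstep hdisj hacyclic hunit hdd σ hσone hσmul A hA hchain hGM
      (m + 1) (eta_mem Ω d M hstep hdisj hacyclic hunit hdd σ hσone hσmul A hA hchain hGM
        m (d m x))

lemma smAux_vv_low {m : ℤ} {i : ι (m + 1)} (h : lowP M (m + 1) i) :
    SA m (VV (m + 1) i) = VV (m + 1) i := by
  simp only [smAux, LinearMap.add_apply, LinearMap.comp_apply]
  rw [eta_vv_low Ω d M hstep hdisj hacyclic hunit hdd σ hσone hσmul A hA hchain hGM h]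
  rw [vv_low Ω d M hstep hdisj hacyclic hunit h]
  have h2 : d m (d (m + 1) (Ω (m + 1 + 1) (PT i h))) = 0 := by
    simpa using LinearMap.congr_fun (hdd m) (Ω (m + 1 + 1) (PT i h))
  rw [h2, map_zero, add_zero]

lemma smAux_up {m : ℤ} {b : ι (m + 1)} (h : upP M (m + 1) b) :
    SA m (Ω (m + 1) b) = Ω (m + 1) b := by
  simp only [smAux, LinearMap.add_apply, LinearMap.comp_apply]
  have hnl : ¬ lowP M (m + 1) b := fun hl =>
    low_up_not Ω d M hstep hdisj hacyclic hunit hl h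
  rw [eta_nonlow Ω d M hstep hdisj hacyclic hunit hdd σ hσone hσmul A hA hchain hGM hnl,
    map_zero, zero_add]
  obtain ⟨a, ha, hpa⟩ := up_succ Ω d M hstep hdisj hacyclic hunit h
  rw [← hpa, ← vv_low Ω d M hstep hdisj hacyclic hunit ha]
  rw [eta_vv_low Ω d M hstep hdisj hacyclic hunit hdd σ hσone hσmul A hA hchain hGM ha]

lemma smAux_TT_id {m : ℤ} {x : C (m + 1)} (hx : x ∈ TT Ω d M (m + 1)) :
    SA m x = x := by
  induction hx using Submodule.span_induction with
  | mem y hy =>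
      rcases hy with ⟨j, hj, rfl⟩ | ⟨j, hj, rfl⟩
      · exact smAux_up Ω d M hstep hdisj hacyclic hunit hdd σ hσone hσmul A hA hchain hGM hj
      · obtain ⟨a, ha, hpa⟩ := up_succ Ω d M hstep hdisj hacyclic hunit hj
        rw [← hpa, ← vv_low Ω d M hstep hdisj hacyclic hunit ha]
        exact smAux_vv_low Ω d M hstep hdisj hacyclic hunit hdd σ hσone hσmul A hA hchain hGM ha
  | zero => simp
  | add y z _ _ hy hz => rw [map_add, hy, hz]
  | smul c y _ hy => rw [map_smul, hy]

lemma smAux_d (m : ℤ) (x : C (m + 1 + 1)) :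
    SA m (d (m + 1) x) = d (m + 1) (SA (m + 1) x) := by
  simp only [smAux, LinearMap.add_apply, LinearMap.comp_apply, map_add]
  have h1 : d m (d (m + 1) x) = 0 := by
    simpa using LinearMap.congr_fun (hdd m) x
  have h2 : d (m + 1) (d (m + 1 + 1) (ETA (m + 1 + 1) x)) = 0 := by
    simpa using LinearMap.congr_fun (hdd (m + 1)) (ETA (m + 1 + 1) x)
  rw [h1, map_zero, add_zero, h2, zero_add]


lemma ceq_symm_eq {m n : ℤ} (h : m = n) :
    (ceq (R := R) (C := C) h).symm = ceq h.symm := by subst h; rfl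

-- ######## equivariance ########

lemma A_vv (g : G) (n : ℤ) (i : ι n) : A g n (VV n i) = VV n (σ g n i) := by
  by_cases h : lowP M n i
  · rw [vv_low Ω d M hstep hdisj hacyclic hunit h, vv_low Ω d M hstep hdisj hacyclic hunit (low_sigma Ω d M hstep hdisj hacyclic hunit hdd σ hσone hσmul A hA hchain hGM g h)]
    have hc := LinearMap.congr_fun (hchain g n) (Ω (n + 1) (PT i h))
    simp only [LinearMap.comp_apply] at hc
    rw [← hc, hA, pt_sigma Ω d M hstep hdisj hacyclic hunit hdd σ hσone hσmul A hA hchain hGM g h]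
  · rw [vv_nonlow Ω d M hstep hdisj hacyclic hunit h, vv_nonlow Ω d M hstep hdisj hacyclic hunit (nonlow_sigma Ω d M hstep hdisj hacyclic hunit hdd σ hσone hσmul A hA hchain hGM g h), hA]

lemma A_nb (g : G) (n : ℤ) (i : ι n) : A g n (NB n i) = NB n (σ g n i) := by
  rw [newB_apply Ω d M hstep hdisj hacyclic hunit, newB_apply Ω d M hstep hdisj hacyclic hunit]
  exact A_vv Ω d M hstep hdisj hacyclic hunit hdd σ hσone hσmul A hA hchain hGM g n i

lemma eta_A (g : G) (n : ℤ) : ETA n ∘ₗ A g n = A g (n + 1) ∘ₗ ETA n := by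
  apply Module.Basis.ext (NB n)
  intro i
  simp only [LinearMap.comp_apply]
  rw [A_nb Ω d M hstep hdisj hacyclic hunit hdd σ hσone hσmul A hA hchain hGM g n i]
  by_cases h : lowP M n i
  · rw [newB_apply Ω d M hstep hdisj hacyclic hunit, newB_apply Ω d M hstep hdisj hacyclic hunit]
    rw [eta_vv_low Ω d M hstep hdisj hacyclic hunit hdd σ hσone hσmul A hA hchain hGM (low_sigma Ω d M hstep hdisj hacyclic hunit hdd σ hσone hσmul A hA hchain hGM g h), eta_vv_low Ω d M hstep hdisj hacyclic hunit hdd σ hσone hσmul A hA hchain hGM h, pt_sigma Ω d M hstep hdisj hacyclic hunit hdd σ hσone hσmul A hA hchain hGM g h, hA]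
  · rw [newB_apply Ω d M hstep hdisj hacyclic hunit, newB_apply Ω d M hstep hdisj hacyclic hunit, vv_nonlow Ω d M hstep hdisj hacyclic hunit h, vv_nonlow Ω d M hstep hdisj hacyclic hunit (nonlow_sigma Ω d M hstep hdisj hacyclic hunit hdd σ hσone hσmul A hA hchain hGM g h)]
    rw [eta_nonlow Ω d M hstep hdisj hacyclic hunit hdd σ hσone hσmul A hA hchain hGM h, eta_nonlow Ω d M hstep hdisj hacyclic hunit hdd σ hσone hσmul A hA hchain hGM (nonlow_sigma Ω d M hstep hdisj hacyclic hunit hdd σ hσone hσmul A hA hchain hGM g h), map_zero]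

lemma smAux_A (g : G) (m : ℤ) (x : C (m + 1)) :
    SA m (A g (m + 1) x) = A g (m + 1) (SA m x) := by
  simp only [smAux, LinearMap.add_apply, LinearMap.comp_apply]
  have e1 := LinearMap.congr_fun (eta_A Ω d M hstep hdisj hacyclic hunit hdd σ hσone hσmul A hA hchain hGM g (m + 1)) x
  have e2 := LinearMap.congr_fun (hchain g (m + 1)) (ETA (m + 1) x)
  have e3 := LinearMap.congr_fun (hchain g m) x
  have e4 := LinearMap.congr_fun (eta_A Ω d M hstep hdisj hacyclic hunit hdd σ hσone hσmul A hA hchain hGM g m) (d m x)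
  simp only [LinearMap.comp_apply] at e1 e2 e3 e4
  rw [e1, e2, e3, e4, map_add]

lemma A_one (n : ℤ) : A 1 n = LinearMap.id := by
  apply Module.Basis.ext (Ω n)
  intro i
  rw [hA, hσone]
  rfl

lemma A_mul (g h : G) (n : ℤ) : A (g * h) n = A g n ∘ₗ A h n := by
  apply Module.Basis.ext (Ω n)
  intro i
  rw [hA, hσmul]
  simp only [LinearMap.comp_apply]
  rw [hA, hA]

lemma TT_d (n : ℤ) : ∀ x ∈ TT Ω d M (n + 1), d n x ∈ TT Ω d M n := by
  intro x hx
  induction hx using Submodule.span_induction with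
  | mem y hy =>
      rcases hy with ⟨j, hj, rfl⟩ | ⟨j, hj, rfl⟩
      · exact Submodule.subset_span (Or.inr ⟨j, hj, rfl⟩)
      · have h0 : d n (d (n + 1) (Ω (n + 1 + 1) j)) = 0 := by
          simpa using LinearMap.congr_fun (hdd n) (Ω (n + 1 + 1) j)
        rw [h0]
        exact Submodule.zero_mem _
  | zero => simpa using Submodule.zero_mem (TT Ω d M n)
  | add y z _ _ hy hz => rw [map_add]; exact Submodule.add_mem _ hy hz
  | smul c y _ hy => rw [map_smul]; exact Submodule.smul_mem _ c hy

lemma TT_A (g : G) (n : ℤ) : ∀ x ∈ TT Ω d M n, A g n x ∈ TT Ω d M n := by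
  intro x hx
  induction hx using Submodule.span_induction with
  | mem y hy =>
      rcases hy with ⟨j, hj, rfl⟩ | ⟨j, hj, rfl⟩
      · rw [hA]
        exact Submodule.subset_span (Or.inl ⟨σ g n j, up_sigma Ω d M hstep hdisj hacyclic hunit hdd σ hσone hσmul A hA hchain hGM g hj, rfl⟩)
      · have hc := LinearMap.congr_fun (hchain g n) (Ω (n + 1) j)
        simp only [LinearMap.comp_apply] at hc
        rw [← hc, hA]
        exact Submodule.subset_span (Or.inr ⟨σ g (n + 1) j, up_sigma Ω d M hstep hdisj hacyclic hunit hdd σ hσone hσmul A hA hchain hGM g hj, rfl⟩)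
  | zero => simpa using Submodule.zero_mem (TT Ω d M n)
  | add y z _ _ hy hz => rw [map_add]; exact Submodule.add_mem _ hy hz
  | smul c y _ hy => rw [map_smul]; exact Submodule.smul_mem _ c hy

-- ######## properties of the splitting map s ########

lemma sm_mem (n : ℤ) (x : C n) : SM n x ∈ TT Ω d M n := by
  show (ceq (R := R) (show n - 1 + 1 = n by omega))
      (SA (n - 1) ((ceq (R := R) (show n - 1 + 1 = n by omega)).symm x)) ∈ TT Ω d M n
  exact TT_cast Ω d M hstep hdisj hacyclic hunit hdd σ hσone hσmul A hA hchain hGM (by omega) (smAux_mem Ω d M hstep hdisj hacyclic hunit hdd σ hσone hσmul A hA hchain hGM (n - 1) _)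

lemma sm_TT_id {n : ℤ} {x : C n} (hx : x ∈ TT Ω d M n) : SM n x = x := by
  show (ceq (R := R) (show n - 1 + 1 = n by omega))
      (SA (n - 1) ((ceq (R := R) (show n - 1 + 1 = n by omega)).symm x)) = x
  have h1 : ((ceq (R := R) (show n - 1 + 1 = n by omega)).symm x) ∈ TT Ω d M (n - 1 + 1) := by
    rw [ceq_symm_eq Ω d M hstep hdisj hacyclic hunit hdd σ hσone hσmul A hA hchain hGM]
    exact TT_cast Ω d M hstep hdisj hacyclic hunit hdd σ hσone hσmul A hA hchain hGM _ hx
  rw [smAux_TT_id Ω d M hstep hdisj hacyclic hunit hdd σ hσone hσmul A hA hchain hGM h1]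
  exact LinearEquiv.apply_symm_apply _ x

lemma sm_d_aux {k m n : ℤ} (hm : m + 1 = n) (hk : k + 1 = n + 1) (x : C (n + 1)) :
    ceq (R := R) hm (SA m ((ceq (R := R) hm).symm (d n x))) =
      d n (ceq (R := R) hk (SA k ((ceq (R := R) hk).symm x))) := by
  have hk' : k = n := by omega
  subst hk'
  subst hm
  show SA m (d (m + 1) x) = d (m + 1) (SA (m + 1) x)
  exact smAux_d Ω d M hstep hdisj hacyclic hunit hdd σ hσone hσmul A hA hchain hGM m x

lemma sm_d (n : ℤ) (x : C (n + 1)) : SM n (d n x) = d n (SM (n + 1) x) := by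
  show (ceq (R := R) (show n - 1 + 1 = n by omega))
      (SA (n - 1) ((ceq (R := R) (show n - 1 + 1 = n by omega)).symm (d n x))) =
    d n ((ceq (R := R) (show n + 1 - 1 + 1 = n + 1 by omega))
      (SA (n + 1 - 1) ((ceq (R := R) (show n + 1 - 1 + 1 = n + 1 by omega)).symm x)))
  exact sm_d_aux Ω d M hstep hdisj hacyclic hunit hdd σ hσone hσmul A hA hchain hGM (by omega) (by omega) x

lemma sm_A_aux {m n : ℤ} (hm : m + 1 = n) (g : G) (x : C n) :
    ceq (R := R) hm (SA m ((ceq (R := R) hm).symm (A g n x))) =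
      A g n (ceq (R := R) hm (SA m ((ceq (R := R) hm).symm x))) := by
  subst hm
  show SA m (A g (m + 1) x) = A g (m + 1) (SA m x)
  exact smAux_A Ω d M hstep hdisj hacyclic hunit hdd σ hσone hσmul A hA hchain hGM g m x

lemma sm_A (g : G) (n : ℤ) (x : C n) : SM n (A g n x) = A g n (SM n x) := by
  show (ceq (R := R) (show n - 1 + 1 = n by omega))
      (SA (n - 1) ((ceq (R := R) (show n - 1 + 1 = n by omega)).symm (A g n x))) =
    A g n ((ceq (R := R) (show n - 1 + 1 = n by omega))
      (SA (n - 1) ((ceq (R := R) (show n - 1 + 1 = n by omega)).symm x)))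
  exact sm_A_aux Ω d M hstep hdisj hacyclic hunit hdd σ hσone hσmul A hA hchain hGM (by omega) g x
end Main2
/-- Equivariant Algebraic Morse Theory: given a `G`-equivariant acyclic
matching `M` with invertible weights on `P(C_*,Ω)`, there is a `G`-chain
complex `C_*^M` and a `G`-equivariant chain isomorphism
`C_* ≅_G C_*^M ⊕ T_*` where `T_* = ⊕_{G(a,b) ∈ M/G} 𝒜(Gb)`. -/
theorem stmt10 {R G : Type} [CommRing R] [Group G] [Finite G]
    (ι : ℤ → Type) [∀ n, Fintype (ι n)]
    (C : ℤ → Type) [∀ n, AddCommGroup (C n)] [∀ n, Module R (C n)]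
    (Ω : ∀ n, Module.Basis (ι n) R (C n))
    (d : ∀ n : ℤ, C (n + 1) →ₗ[R] C n)
    (hdd : ∀ n, (d n) ∘ₗ (d (n + 1)) = 0)
    (σ : G → ∀ n, ι n → ι n)
    (hσone : ∀ n (i : ι n), σ 1 n i = i)
    (hσmul : ∀ g h n (i : ι n), σ (g * h) n i = σ g n (σ h n i))
    (A : G → ∀ n, C n →ₗ[R] C n)
    (hA : ∀ g n (i : ι n), A g n (Ω n i) = Ω n (σ g n i))
    (hchain : ∀ g n, (d n) ∘ₗ (A g (n + 1)) = (A g n) ∘ₗ (d n))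
    (M : Set ((Σ n, ι n) × (Σ n, ι n)))
    (hstep : ∀ e ∈ M, ∃ h : e.2.1 = e.1.1 + 1,
      (Ω e.1.1).repr (d e.1.1 (h ▸ (Ω e.2.1) e.2.2)) e.1.2 ≠ 0)
    (hdisj : ∀ e ∈ M, ∀ e' ∈ M, e ≠ e' →
      e.1 ≠ e'.1 ∧ e.1 ≠ e'.2 ∧ e.2 ≠ e'.1 ∧ e.2 ≠ e'.2)
    (hacyclic : ¬ ∃ (m : ℕ) (_ : 2 ≤ m) (p q : ZMod m → Σ n, ι n),
      (∀ i, (p i, q i) ∈ M) ∧ Function.Injective q ∧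
      ∀ i, ∃ h : (q (i + 1)).1 = (p i).1 + 1,
        (Ω (p i).1).repr (d (p i).1 (h ▸ (Ω (q (i + 1)).1) (q (i + 1)).2))
          (p i).2 ≠ 0)
    (hGM : ∀ e ∈ M, ∀ g : G,
      ((⟨e.1.1, σ g e.1.1 e.1.2⟩ : Σ n, ι n),
       (⟨e.2.1, σ g e.2.1 e.2.2⟩ : Σ n, ι n)) ∈ M)
    (hunit : ∀ e ∈ M, ∀ h : e.2.1 = e.1.1 + 1,
      IsUnit ((Ω e.1.1).repr (d e.1.1 (h ▸ (Ω e.2.1) e.2.2)) e.1.2)) :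
    ∃ (D : GChain R G)
      (hT : ∀ n, ∀ x ∈ TT Ω d M (n + 1), d n x ∈ TT Ω d M n)
      (hGT : ∀ (g : G) (n : ℤ), ∀ x ∈ TT Ω d M n, A g n x ∈ TT Ω d M n)
      (e : ∀ n : ℤ, C n ≃ₗ[R] D.X n × (TT Ω d M n)),
      -- the isomorphism is a chain map …
      (∀ n (x : C (n + 1)),
        e n (d n x) = (D.d n (e (n + 1) x).1,
          ((d n).restrict (hT n)) (e (n + 1) x).2)) ∧
      -- … and is G-equivariant
      (∀ (g : G) (n : ℤ) (x : C n),
        e n (A g n x) = (D.ρ g n (e n x).1,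
          ((A g n).restrict (hGT g n)) (e n x).2)) := by
  
  classical
  have hle : ∀ n, TT Ω d M (n + 1) ≤ (TT Ω d M n).comap (d n) :=
    fun n x hx => TT_d Ω d M hstep hdisj hacyclic hunit hdd σ hσone hσmul A hA hchain hGM n x hx
  have hleA : ∀ (g : G) (n : ℤ), TT Ω d M n ≤ (TT Ω d M n).comap (A g n) :=
    fun g n x hx => TT_A Ω d M hstep hdisj hacyclic hunit hdd σ hσone hσmul A hA hchain hGM g n x hx
  set F : ∀ n : ℤ, C n →ₗ[R] (C n ⧸ TT Ω d M n) × (TT Ω d M n) := fun n =>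
    LinearMap.prod (TT Ω d M n).mkQ
      (LinearMap.codRestrict _ (sm Ω d M hstep hdisj hacyclic hunit n) (sm_mem Ω d M hstep hdisj hacyclic hunit hdd σ hσone hσmul A hA hchain hGM n)) with hFdef
  have hFapp : ∀ (n : ℤ) (x : C n), F n x =
      (Submodule.Quotient.mk x, ⟨sm Ω d M hstep hdisj hacyclic hunit n x, sm_mem Ω d M hstep hdisj hacyclic hunit hdd σ hσone hσmul A hA hchain hGM n x⟩) := fun n x => rfl
  have hFbij : ∀ n, Function.Bijective (F n) := by
    intro n
    constructor
    · apply (injective_iff_map_eq_zero (F n)).mpr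
      intro z hz
      rw [hFapp] at hz
      have h1 : Submodule.Quotient.mk (p := TT Ω d M n) z = 0 := congrArg Prod.fst hz
      have h2 : sm Ω d M hstep hdisj hacyclic hunit n z = 0 := congrArg (fun p => (p.2 : TT Ω d M n).1) hz
      have hmem : z ∈ TT Ω d M n := (Submodule.Quotient.mk_eq_zero _).mp h1
      rw [← sm_TT_id Ω d M hstep hdisj hacyclic hunit hdd σ hσone hσmul A hA hchain hGM hmem]
      exact h2
    · rintro ⟨y, t⟩
      obtain ⟨z, rfl⟩ := Submodule.Quotient.mk_surjective _ y
      refine ⟨z - sm Ω d M hstep hdisj hacyclic hunit n z + t.1, ?_⟩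
      have hsz := sm_mem Ω d M hstep hdisj hacyclic hunit hdd σ hσone hσmul A hA hchain hGM n z
      rw [hFapp]
      refine Prod.ext ?_ ?_
      · show Submodule.Quotient.mk (z - sm Ω d M hstep hdisj hacyclic hunit n z + t.1) = Submodule.Quotient.mk z
        rw [Submodule.Quotient.mk_add, Submodule.Quotient.mk_sub]
        rw [(Submodule.Quotient.mk_eq_zero _).mpr hsz,
          (Submodule.Quotient.mk_eq_zero _).mpr t.2]
        simp
      · apply Subtype.ext
        show sm Ω d M hstep hdisj hacyclic hunit n (z - sm Ω d M hstep hdisj hacyclic hunit n z + t.1) = t.1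
        rw [map_add, map_sub, sm_TT_id Ω d M hstep hdisj hacyclic hunit hdd σ hσone hσmul A hA hchain hGM hsz, sm_TT_id Ω d M hstep hdisj hacyclic hunit hdd σ hσone hσmul A hA hchain hGM t.2]
        simp
  refine ⟨{ X := fun n => C n ⧸ TT Ω d M n
            d := fun n => Submodule.mapQ _ _ (d n) (hle n)
            dd := ?_
            ρ := fun g n => Submodule.mapQ _ _ (A g n) (hleA g n)
            ρ_one := ?_
            ρ_mul := ?_
            ρ_d := ?_ },
    TT_d Ω d M hstep hdisj hacyclic hunit hdd σ hσone hσmul A hA hchain hGM, fun g n => TT_A Ω d M hstep hdisj hacyclic hunit hdd σ hσone hσmul A hA hchain hGM g n,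
    fun n => LinearEquiv.ofBijective (F n) (hFbij n), ?_, ?_⟩
  · -- dd
    intro n
    apply Submodule.linearMap_qext
    ext x
    simp only [LinearMap.comp_apply, Submodule.mkQ_apply, Submodule.mapQ_apply,
      LinearMap.zero_apply, LinearMap.zero_comp]
    have h0 : d n (d (n + 1) x) = 0 := by simpa using LinearMap.congr_fun (hdd n) x
    rw [h0, Submodule.Quotient.mk_zero]
  · -- ρ_one
    intro n x
    obtain ⟨y, rfl⟩ := Submodule.Quotient.mk_surjective _ x
    show Submodule.mapQ _ _ (A 1 n) (hleA 1 n) (Submodule.Quotient.mk y) =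
      Submodule.Quotient.mk y
    rw [Submodule.mapQ_apply]
    have h0 : A 1 n y = y := by rw [A_one Ω d M hstep hdisj hacyclic hunit hdd σ hσone hσmul A hA hchain hGM]; rfl
    rw [h0]
  · -- ρ_mul
    intro g h n x
    obtain ⟨y, rfl⟩ := Submodule.Quotient.mk_surjective _ x
    show Submodule.mapQ _ _ (A (g * h) n) (hleA (g * h) n) (Submodule.Quotient.mk y) =
      Submodule.mapQ _ _ (A g n) (hleA g n)
        (Submodule.mapQ _ _ (A h n) (hleA h n) (Submodule.Quotient.mk y))
    rw [Submodule.mapQ_apply, Submodule.mapQ_apply, Submodule.mapQ_apply]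
    have h0 : A (g * h) n y = A g n (A h n y) := by rw [A_mul Ω d M hstep hdisj hacyclic hunit hdd σ hσone hσmul A hA hchain hGM]; rfl
    rw [h0]
  · -- ρ_d
    intro g n
    apply Submodule.linearMap_qext
    ext x
    simp only [LinearMap.comp_apply, Submodule.mkQ_apply, Submodule.mapQ_apply]
    have h0 : d n (A g (n + 1) x) = A g n (d n x) := by
      simpa using LinearMap.congr_fun (hchain g n) x
    rw [h0]
  · -- chain condition
    intro n x
    show F n (d n x) = _
    rw [hFapp]
    refine Prod.ext ?_ ?_
    · show Submodule.Quotient.mk (d n x) =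
        Submodule.mapQ _ _ (d n) (hle n) ((LinearEquiv.ofBijective (F (n + 1)) (hFbij (n + 1))) x).1
      show Submodule.Quotient.mk (d n x) = Submodule.mapQ _ _ (d n) (hle n) (F (n + 1) x).1
      rw [hFapp]
      rw [Submodule.mapQ_apply]
    · apply Subtype.ext
      show sm Ω d M hstep hdisj hacyclic hunit n (d n x) = ((d n).restrict (TT_d Ω d M hstep hdisj hacyclic hunit hdd σ hσone hσmul A hA hchain hGM n)
        ((LinearEquiv.ofBijective (F (n + 1)) (hFbij (n + 1))) x).2 : TT Ω d M n).1
      show sm Ω d M hstep hdisj hacyclic hunit n (d n x) =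
        ((d n).restrict (TT_d Ω d M hstep hdisj hacyclic hunit hdd σ hσone hσmul A hA hchain hGM n) (F (n + 1) x).2 : TT Ω d M n).1
      rw [hFapp]
      rw [LinearMap.restrict_apply]
      exact sm_d Ω d M hstep hdisj hacyclic hunit hdd σ hσone hσmul A hA hchain hGM n x
  · -- equivariance
    intro g n x
    show F n (A g n x) = _
    rw [hFapp]
    refine Prod.ext ?_ ?_
    · show Submodule.Quotient.mk (A g n x) =
        Submodule.mapQ _ _ (A g n) (hleA g n) ((LinearEquiv.ofBijective (F n) (hFbij n)) x).1
      show Submodule.Quotient.mk (A g n x) =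
        Submodule.mapQ _ _ (A g n) (hleA g n) (F n x).1
      rw [hFapp]
      rw [Submodule.mapQ_apply]
    · apply Subtype.ext
      show sm Ω d M hstep hdisj hacyclic hunit n (A g n x) = ((A g n).restrict (fun y hy => TT_A Ω d M hstep hdisj hacyclic hunit hdd σ hσone hσmul A hA hchain hGM g n y hy)
        ((LinearEquiv.ofBijective (F n) (hFbij n)) x).2 : TT Ω d M n).1
      show sm Ω d M hstep hdisj hacyclic hunit n (A g n x) =
        ((A g n).restrict (fun y hy => TT_A Ω d M hstep hdisj hacyclic hunit hdd σ hσone hσmul A hA hchain hGM g n y hy) (F n x).2 : TT Ω d M n).1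
      rw [hFapp]
      rw [LinearMap.restrict_apply]
      exact sm_A Ω d M hstep hdisj hacyclic hunit hdd σ hσone hσmul A hA hchain hGM g n x
end
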